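/- Let (E,ℒ) be a labeled graph satisfying the standing assumptions with ℰ the smallest normal accommodating set, and let B ∈ ℰ be minimal. If B does not connect to any loop, then r(B,β) ∩ B = ∅ for every β ∈ ℒ*(E); moreover, every minimal B′ ∈ ℰ with B′ ⊆ r(B,δ) for some δ ∈ ℒ*(E) also does not connect to any loop. -/
import Mathlib


/-- The `n`-fold concatenation (power) `w^n` of a finite word `w`. -/
def wpow {Λ : Type*} (w : List Λ) (n : ℕ) : List Λ := (List.replicate n w).flatten

/-- The finite word `x_{[1,n]}` formed by the first `n` letters of an infinite word `x`. -/
def wordPrefix {Λ : Type*} (x : ℕ → Λ) (n : ℕ) : List Λ := (List.range n).map x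

/-- A labeled graph `(E, ℒ)`: a directed graph with vertex set `V` and edge type `Edge`
(with range and source maps), together with a surjective labeling map `lbl` onto the
alphabet `Λ`. -/
structure LabeledGraph (V : Type*) (Λ : Type*) where
  Edge : Type*
  src : Edge → V
  rng : Edge → V
  lbl : Edge → Λ
  lbl_surjective : Function.Surjective lbl

namespace LabeledGraph

variable {V : Type*} {Λ : Type*}

/-- `G.PathLabel u w α` holds iff there is a finite path `λ` of length `≥ 1` in the graph
with source `u`, range `w` and label word `ℒ(λ) = α`. -/
inductive PathLabel (G : LabeledGraph V Λ) : V → V → List Λ → Prop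
  | single (e : G.Edge) : PathLabel G (G.src e) (G.rng e) [G.lbl e]
  | cons (e : G.Edge) {w : V} {α : List Λ} :
      PathLabel G (G.rng e) w α → PathLabel G (G.src e) w (G.lbl e :: α)

variable (G : LabeledGraph V Λ)

/-- `α ∈ ℒ*(E)`: `α` is the label of some path of length `≥ 1`. -/
def IsLabel (α : List Λ) : Prop := ∃ u w, G.PathLabel u w α

/-- The relative range `r(A, α)` of `α` with respect to `A`. -/
def rel (A : Set V) (α : List Λ) : Set V := {w | ∃ u ∈ A, G.PathLabel u w α}

/-- `r(α) = r(E⁰, α)`. -/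
def range' (α : List Λ) : Set V := G.rel Set.univ α

/-- `s(α)`: the set of sources of paths labeled `α`. -/
def srcSet (α : List Λ) : Set V := {u | ∃ w, G.PathLabel u w α}

/-- `ℒ(AEⁿ)`: labels of paths of length `n` with source in `A`. -/
def lblFrom (A : Set V) (n : ℕ) : Set (List Λ) :=
  {α | α.length = n ∧ ∃ u ∈ A, ∃ w, G.PathLabel u w α}

/-- `ℒ(AE^{≥1})`: labels of paths of length `≥ 1` with source in `A`. -/
def lblFromGe (A : Set V) : Set (List Λ) := {α | ∃ u ∈ A, ∃ w, G.PathLabel u w α}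

/-- `ℒ(EⁿA)`: labels of paths of length `n` with range in `A`. -/
def lblTo (A : Set V) (n : ℕ) : Set (List Λ) :=
  {α | α.length = n ∧ ∃ u, ∃ w ∈ A, G.PathLabel u w α}

/-- The generalized vertex `[v]_l`: the set of vertices `w` receiving at least one edge
such that `ℒ(E^k w) = ℒ(E^k v)` for all `1 ≤ k ≤ l`. -/
def gv (v : V) (l : ℕ) : Set V :=
  {w | (∃ e : G.Edge, G.rng e = w) ∧
    ∀ k : ℕ, 1 ≤ k → k ≤ l → G.lblTo {w} k = G.lblTo {v} k}

/-- Membership in `ℰ`, the smallest collection of subsets of `E⁰` containing all ranges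
`r(α)` and closed under relative ranges, finite intersections, finite unions and
relative complements (the smallest normal accommodating set). -/
inductive memE : Set V → Prop
  | empty : memE ∅
  | range (α : List Λ) : α ≠ [] → memE (G.range' α)
  | relRange {A : Set V} (α : List Λ) : α ≠ [] → memE A → memE (G.rel A α)
  | inter {A C : Set V} : memE A → memE C → memE (A ∩ C)
  | union {A C : Set V} : memE A → memE C → memE (A ∪ C)
  | diff {A C : Set V} : memE A → memE C → memE (A \ C)

/-- The standing assumptions on the labeled space `(E, ℒ, ℰ)`: the graph has no sinks and
the labeled space is weakly left-resolving, set-finite and receiver set-finite. -/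
structure Standing : Prop where
  no_sinks : ∀ u : V, ∃ e : G.Edge, G.src e = u
  weakly_left_resolving : ∀ A C : Set V, G.memE A → G.memE C →
    ∀ α : List Λ, α ≠ [] → G.rel (A ∩ C) α = G.rel A α ∩ G.rel C α
  set_finite : ∀ A : Set V, G.memE A → ∀ k : ℕ, 1 ≤ k → (G.lblFrom A k).Finite
  receiver_set_finite : ∀ A : Set V, G.memE A → ∀ k : ℕ, 1 ≤ k → (G.lblTo A k).Finite

/-- `α` is agreeable for `[v]_l` (the condition only depends on `l`):
`α = βα' = α'γ` with `α', β, γ ∈ ℒ*(E)` and `|β| = |γ| ≤ l`. -/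
def Agreeable (l : ℕ) (α : List Λ) : Prop :=
  ∃ α' β γ : List Λ, G.IsLabel α' ∧ G.IsLabel β ∧ G.IsLabel γ ∧
    β.length = γ.length ∧ β.length ≤ l ∧ α = β ++ α' ∧ α = α' ++ γ

/-- `α` (a path with `s(α) ∩ [v]_l ≠ ∅`) is disagreeable for `[v]_l`. -/
def DisagreeableFor (v : V) (l : ℕ) (α : List Λ) : Prop :=
  (G.srcSet α ∩ G.gv v l).Nonempty ∧ ¬ G.Agreeable l α

/-- The generalized vertex `[v]_l` is disagreeable: there is `N ≥ 1` such that for every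
`n > N` there is a path in `ℒ(E^{≥n})` which is disagreeable for `[v]_l`. -/
def DisagreeableGV (v : V) (l : ℕ) : Prop :=
  ∃ N : ℕ, 1 ≤ N ∧ ∀ n : ℕ, N < n →
    ∃ α : List Λ, n ≤ α.length ∧ G.DisagreeableFor v l α

/-- The labeled space `(E, ℒ, ℰ)` is disagreeable. -/
def Disagreeable : Prop :=
  ∀ v : V, ∃ L : ℕ, 1 ≤ L ∧ ∀ l : ℕ, L ≤ l → G.DisagreeableGV v l

/-- `(α, A)` is a loop: `A ∈ ℰ` is nonempty, `α ∈ ℒ*(E)` and `A ⊆ r(A, α)`. -/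
def IsLoop (α : List Λ) (A : Set V) : Prop :=
  α ≠ [] ∧ G.memE A ∧ A.Nonempty ∧ A ⊆ G.rel A α

/-- The loop `(α, A)` has an exit: either (i) there is `β ∈ ℒ(AE^{|α|})` with `β ≠ α` and
`r(A, β) ≠ ∅`, or (ii) `A ⊊ r(A, α)`. -/
def HasExit (α : List Λ) (A : Set V) : Prop :=
  (∃ β : List Λ, β ∈ G.lblFrom A α.length ∧ β ≠ α ∧ (G.rel A β).Nonempty) ∨
    A ⊂ G.rel A α

/-- `A ∈ ℰ` is minimal: `A ≠ ∅` and `A ∩ C ∈ {A, ∅}` for every `C ∈ ℰ`. -/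
def MinimalSet (A : Set V) : Prop :=
  G.memE A ∧ A.Nonempty ∧ ∀ C : Set V, G.memE C → A ∩ C = A ∨ A ∩ C = ∅

/-- A set `Bset ⊆ E⁰` connects to a loop: there are a loop `(α, A)` and finitely many
paths `δ₁, …, δ_m ∈ ℒ*(E)`, none of which is an initial path of another, with
`A ⊆ ∪ᵢ r(Bset, δᵢ)`. -/
def ConnectsToLoop (Bset : Set V) : Prop :=
  ∃ (α : List Λ) (A : Set V), G.IsLoop α A ∧
    ∃ (m : ℕ) (δ : Fin m → List Λ), (∀ i, G.IsLabel (δ i)) ∧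
      (∀ i j, i ≠ j → ¬ (δ i <+: δ j)) ∧ A ⊆ ⋃ i, G.rel Bset (δ i)

/-- Every vertex connects to a loop: every generalized vertex `[v]_l` connects to a loop. -/
def EveryVertexConnectsToLoop : Prop :=
  ∀ (v : V) (l : ℕ), 1 ≤ l → (∃ e : G.Edge, G.rng e = v) →
    G.ConnectsToLoop (G.gv v l)

/-- The labeled space `(E, ℒ, ℰ)` is strongly cofinal. -/
def StronglyCofinal : Prop :=
  ∀ x : ℕ → Λ, (∀ n : ℕ, 1 ≤ n → G.IsLabel (wordPrefix x n)) →
    ∀ (v : V) (l : ℕ), (∃ e : G.Edge, G.rng e = v) → 1 ≤ l →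
      ∃ N : ℕ, 1 ≤ N ∧ ∃ (m : ℕ) (lam : Fin m → List Λ),
        (∀ i, G.IsLabel (lam i)) ∧
        G.range' (wordPrefix x N) ⊆ ⋃ i, G.rel (G.gv v l) (lam i)

/-- A subset `H ⊆ ℰ` is hereditary: it is closed under finite unions, relative ranges,
and subsets belonging to `ℰ`. -/
def IsHereditary (H : Set (Set V)) : Prop :=
  (∀ A ∈ H, G.memE A) ∧
  (∀ A ∈ H, ∀ C ∈ H, A ∪ C ∈ H) ∧
  (∀ A ∈ H, ∀ β : List Λ, G.IsLabel β → G.rel A β ∈ H) ∧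
  (∀ A ∈ H, ∀ C : Set V, G.memE C → C ⊆ A → C ∈ H)

/-- A subset `H ⊆ ℰ` is saturated: every `A ∈ ℰ` with `r(A, β) ∈ H` for all
`β ∈ ℒ*(E)` belongs to `H`. -/
def IsSaturated (H : Set (Set V)) : Prop :=
  ∀ A : Set V, G.memE A → (∀ β : List Λ, G.IsLabel β → G.rel A β ∈ H) → A ∈ H

theorem pathLabel_ne_nil {v : V} {w : V} {α : List Λ} (h : G.PathLabel v w α) : α ≠ [] := by
  cases h <;> simp

theorem isLabel_ne_nil {α : List Λ} (h : G.IsLabel α) : α ≠ [] := by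
  obtain ⟨u, w, h⟩ := h; exact G.pathLabel_ne_nil h

theorem pathLabel_append {u w : V} {α : List Λ} (h1 : G.PathLabel u w α) :
    ∀ {v : V} {β : List Λ}, G.PathLabel w v β → G.PathLabel u v (α ++ β) := by
  induction h1 with
  | single e => intro v β h2; exact PathLabel.cons e h2
  | cons e h ih => intro v β h2; exact PathLabel.cons e (ih h2)

theorem rel_mono {A C : Set V} (h : A ⊆ C) (α : List Λ) : G.rel A α ⊆ G.rel C α := by
  rintro w ⟨u, hu, hp⟩; exact ⟨u, h hu, hp⟩

theorem rel_rel_subset (A : Set V) (α β : List Λ) :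
    G.rel (G.rel A α) β ⊆ G.rel A (α ++ β) := by
  rintro w ⟨u, ⟨x, hx, hpx⟩, hp⟩
  exact ⟨x, hx, G.pathLabel_append hpx hp⟩

end LabeledGraph

/-- Part of the proofs of Theorem 3.10(b) and Proposition 4.6: if `B ∈ ℰ` is minimal and
does not connect to any loop, then `r(B, β) ∩ B = ∅` for every `β ∈ ℒ*(E)`; moreover,
every minimal `B' ∈ ℰ` contained in some relative range `r(B, δ)` also does not connect
to any loop. -/
theorem stmt_13 {V : Type*} {Λ : Type*} [Countable V] [Countable Λ]
    (G : LabeledGraph V Λ) [Countable G.Edge] (hS : G.Standing)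
    (Bset : Set V) (hB : G.MinimalSet Bset) (hnc : ¬ G.ConnectsToLoop Bset) :
    (∀ β : List Λ, G.IsLabel β → G.rel Bset β ∩ Bset = ∅) ∧
    (∀ (B' : Set V) (δ : List Λ), G.MinimalSet B' → G.IsLabel δ →
      B' ⊆ G.rel Bset δ → ¬ G.ConnectsToLoop B') := by
  classical
  constructor
  · intro β hβ
    by_contra hne
    apply hnc
    have hmem : G.memE (G.rel Bset β) :=
      LabeledGraph.memE.relRange β (G.isLabel_ne_nil hβ) hB.1
    rcases hB.2.2 _ hmem with h | h
    · have hsub : Bset ⊆ G.rel Bset β := Set.inter_eq_left.mp h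
      refine ⟨β, Bset, ⟨G.isLabel_ne_nil hβ, hB.1, hB.2.1, hsub⟩,
        1, fun _ => β, fun _ => hβ, ?_, ?_⟩
      · intro i j hij _; exact hij (Subsingleton.elim i j)
      · intro x hx; exact Set.mem_iUnion.2 ⟨0, hsub hx⟩
    · exact absurd (by rw [Set.inter_comm] at h; exact h) hne
  · intro B' δ hB' hδ hsub hc
    apply hnc
    obtain ⟨α, A, hloop, m, ds, hlab, hpref, hcov⟩ := hc
    set S : Finset (Fin m) :=
      Finset.univ.filter (fun i => (G.rel Bset (δ ++ ds i)).Nonempty) with hS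
    have hrel : ∀ i, G.rel B' (ds i) ⊆ G.rel Bset (δ ++ ds i) := fun i =>
      (G.rel_mono hsub (ds i)).trans (G.rel_rel_subset Bset δ (ds i))
    refine ⟨α, A, hloop, S.card, fun k => δ ++ ds ((S.orderIsoOfFin rfl k : Fin m)),
      ?_, ?_, ?_⟩
    · intro k
      have hk : ((S.orderIsoOfFin rfl k : Fin m)) ∈ S := (S.orderIsoOfFin rfl k).2
      obtain ⟨w, u, hu, hp⟩ := (Finset.mem_filter.mp hk).2
      exact ⟨u, w, hp⟩
    · intro i j hij hpre
      have hne : ((S.orderIsoOfFin rfl i : Fin m)) ≠ ((S.orderIsoOfFin rfl j : Fin m)) := by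
        intro h
        exact hij ((S.orderIsoOfFin rfl).injective (Subtype.ext h))
      exact hpref _ _ hne ((List.prefix_append_right_inj δ).mp hpre)
    · intro x hx
      obtain ⟨s, ⟨i, rfl⟩, hxs⟩ := hcov hx
      have hx' : x ∈ G.rel Bset (δ ++ ds i) := hrel i hxs
      have hiS : i ∈ S := by
        exact Finset.mem_filter.mpr ⟨Finset.mem_univ i, ⟨x, hx'⟩⟩
      refine Set.mem_iUnion.2 ⟨(S.orderIsoOfFin rfl).symm ⟨i, hiS⟩, ?_⟩
      simpa using hx'
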